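/- Let P ∈ ℝ^{n×r}, Q ∈ ℝ^{ℓ×n}, R ∈ ℝ^{ℓ×r}, B ∈ ℝ^{n×m}, C ∈ ℝ^{p×n}, D ∈ ℝ^{p×m}; assume C⁻¹(im D) ⊆ im P and that 𝒜 := { A : R = Q A P } is nonempty. Let 𝒥* ⊆ ℝ^r be a subspace that satisfies inclusion (13) and contains every subspace of ℝ^r satisfying inclusion (13). Then there exists Ā ∈ 𝒜 such that P(𝒥*) is output-nulling controlled invariant for (Ā,B,C,D); in particular, P(𝒥*) ⊆ 𝒱(Ā,B,C,D), the largest output-nulling controlled invariant subspace of (Ā,B,C,D). -/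

import Mathlib

open Matrix

/-- A subspace 𝒱 ⊆ ℝⁿ is output-nulling controlled invariant for (A,B,C,D). -/
def OutputNulling {n m p : ℕ} (A : Matrix (Fin n) (Fin n) ℝ) (B : Matrix (Fin n) (Fin m) ℝ)
    (C : Matrix (Fin p) (Fin n) ℝ) (D : Matrix (Fin p) (Fin m) ℝ)
    (V : Submodule ℝ (Fin n → ℝ)) : Prop :=
  ∀ v ∈ V, ∃ u : Fin m → ℝ, A.mulVec v + B.mulVec u ∈ V ∧ C.mulVec v + D.mulVec u = 0

/-- A subspace 𝒥 ⊆ ℝʳ satisfies inclusion (13). -/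
def Incl13 {n r l m p : ℕ} (P : Matrix (Fin n) (Fin r) ℝ) (Q : Matrix (Fin l) (Fin n) ℝ)
    (R : Matrix (Fin l) (Fin r) ℝ) (B : Matrix (Fin n) (Fin m) ℝ)
    (C : Matrix (Fin p) (Fin n) ℝ) (D : Matrix (Fin p) (Fin m) ℝ)
    (J : Submodule ℝ (Fin r → ℝ)) : Prop :=
  ∀ v ∈ J, ∃ η : Fin m → ℝ,
    R.mulVec v + (Q * B).mulVec η ∈ Submodule.map (Q * P).mulVecLin J ∧
    (C * P).mulVec v + D.mulVec η = 0

/-- there exists Ā ∈ 𝒜 such that P(𝒥*) is output-nulling controlled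
invariant for (Ā,B,C,D). -/
theorem exists_A_PJstar_output_nulling (n r l m p : ℕ)
    (P : Matrix (Fin n) (Fin r) ℝ) (Q : Matrix (Fin l) (Fin n) ℝ)
    (R : Matrix (Fin l) (Fin r) ℝ)
    (B : Matrix (Fin n) (Fin m) ℝ) (C : Matrix (Fin p) (Fin n) ℝ)
    (D : Matrix (Fin p) (Fin m) ℝ)
    (hCD : (LinearMap.range D.mulVecLin).comap C.mulVecLin ≤ LinearMap.range P.mulVecLin)
    (hne : ∃ A : Matrix (Fin n) (Fin n) ℝ, R = Q * A * P)
    (Jstar : Submodule ℝ (Fin r → ℝ))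
    (hJ : Incl13 P Q R B C D Jstar)
    (hJmax : ∀ J : Submodule ℝ (Fin r → ℝ), Incl13 P Q R B C D J → J ≤ Jstar) :
    ∃ Abar : Matrix (Fin n) (Fin n) ℝ, R = Q * Abar * P ∧
      OutputNulling Abar B C D (Submodule.map P.mulVecLin Jstar) := by
  classical
  obtain ⟨A0, hA0⟩ := hne
  set Pl := P.mulVecLin with hPldef
  set K := LinearMap.ker Pl with hKdef
  -- J₁ : complement of K ⊓ Jstar inside Jstar
  obtain ⟨C', hC'⟩ := Submodule.exists_isCompl
    (Submodule.comap Jstar.subtype (K ⊓ Jstar))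
  set J₁ : Submodule ℝ (Fin r → ℝ) := Submodule.map Jstar.subtype C' with hJ₁def
  have hJ₁le : J₁ ≤ Jstar := Submodule.map_subtype_le _ _
  have hsup : (K ⊓ Jstar) ⊔ J₁ = Jstar := by
    have h1 : Submodule.map Jstar.subtype (Submodule.comap Jstar.subtype (K ⊓ Jstar)) =
        K ⊓ Jstar := by
      rw [Submodule.map_comap_subtype]
      exact inf_eq_right.mpr inf_le_right
    rw [hJ₁def, ← h1, ← Submodule.map_sup, hC'.sup_eq_top, Submodule.map_subtype_top]
  have hKJ₁ : ∀ x, x ∈ K → x ∈ J₁ → x = 0 := by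
    intro x hxK hxJ₁
    obtain ⟨y, hy, rfl⟩ := hxJ₁
    have hy2 : y ∈ Submodule.comap Jstar.subtype (K ⊓ Jstar) := by
      simpa using Submodule.mem_inf.mpr ⟨hxK, y.2⟩
    have : y ∈ (⊥ : Submodule ℝ Jstar) := hC'.inf_eq_bot ▸ Submodule.mem_inf.mpr ⟨hy2, hy⟩
    have : y = 0 := by simpa using this
    simp [this]
  -- complement S of J₁ containing K
  obtain ⟨T, hT⟩ := Submodule.exists_isCompl (K ⊔ J₁)
  set S : Submodule ℝ (Fin r → ℝ) := K ⊔ T with hSdef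
  have hKS : K ≤ S := le_sup_left
  have hcompl : IsCompl J₁ S := by
    constructor
    · rw [Submodule.disjoint_def]
      intro x hxJ₁ hxS
      obtain ⟨k, hk, t, ht, rfl⟩ := Submodule.mem_sup.mp hxS
      have ht0 : t ∈ (K ⊔ J₁) ⊓ T := by
        refine Submodule.mem_inf.mpr ⟨?_, ht⟩
        have : t = (k + t) - k := by ring
        rw [this]
        exact Submodule.sub_mem _ (Submodule.mem_sup_right hxJ₁) (Submodule.mem_sup_left hk)
      rw [hT.inf_eq_bot] at ht0
      have ht0 : t = 0 := by simpa using ht0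
      subst ht0
      rw [add_zero] at hxJ₁ ⊢
      exact hKJ₁ k hk hxJ₁
    · rw [codisjoint_iff]
      rw [hSdef, ← sup_assoc, sup_comm J₁ K, hT.sup_eq_top]
  set π := Submodule.linearProjOfIsCompl J₁ S hcompl with hπdef
  -- choices from Incl13 on J₁
  have key : ∀ x : ↥J₁, ∃ (ηx : Fin m → ℝ) (wx : ↥Jstar),
      (Q * P).mulVec (wx : Fin r → ℝ) = R.mulVec (x : Fin r → ℝ) + (Q * B).mulVec ηx ∧
      (C * P).mulVec (x : Fin r → ℝ) + D.mulVec ηx = 0 := by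
    intro x
    obtain ⟨η, hmem, hnull⟩ := hJ _ (hJ₁le x.2)
    obtain ⟨w, hw, hww⟩ := hmem
    exact ⟨η, ⟨w, hw⟩, by simpa [Matrix.mulVecLin_apply] using hww, hnull⟩
  choose ηf wf hQf hCf using key
  let bJ := Module.Basis.ofVectorSpace ℝ ↥J₁
  set ηmap : ↥J₁ →ₗ[ℝ] (Fin m → ℝ) := bJ.constr ℝ fun i => ηf (bJ i) with hηdef
  set wmap : ↥J₁ →ₗ[ℝ] ↥Jstar := bJ.constr ℝ fun i => wf (bJ i) with hwdef
  -- fact1 : QP (wmap x) = R x + QB (ηmap x)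
  have fact1 : ∀ x : ↥J₁, (Q * P).mulVec ((wmap x : Fin r → ℝ)) =
      R.mulVec (x : Fin r → ℝ) + (Q * B).mulVec (ηmap x) := by
    have : ((Q * P).mulVecLin).comp (Jstar.subtype.comp wmap) =
        (R.mulVecLin).comp J₁.subtype + ((Q * B).mulVecLin).comp ηmap := by
      apply bJ.ext
      intro i
      simp only [LinearMap.comp_apply, LinearMap.add_apply, Submodule.subtype_apply,
        Matrix.mulVecLin_apply, hηdef, hwdef, Module.Basis.constr_basis]
      exact hQf (bJ i)
    intro x
    simpa [Matrix.mulVecLin_apply] using LinearMap.congr_fun this x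
  have fact2 : ∀ x : ↥J₁, (C * P).mulVec (x : Fin r → ℝ) + D.mulVec (ηmap x) = 0 := by
    have : ((C * P).mulVecLin).comp J₁.subtype + (D.mulVecLin).comp ηmap = 0 := by
      apply bJ.ext
      intro i
      simp only [LinearMap.comp_apply, LinearMap.add_apply, Submodule.subtype_apply,
        Matrix.mulVecLin_apply, hηdef, Module.Basis.constr_basis, LinearMap.zero_apply]
      exact hCf (bJ i)
    intro x
    simpa [Matrix.mulVecLin_apply] using LinearMap.congr_fun this x
  -- the map H
  set H : (Fin r → ℝ) →ₗ[ℝ] (Fin n → ℝ) :=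
    (Pl.comp (Jstar.subtype.comp wmap) - B.mulVecLin.comp ηmap).comp π
    + ((A0.mulVecLin).comp Pl).comp (LinearMap.id - J₁.subtype.comp π) with hHdef
  have hHapply : ∀ v, H v = Pl (wmap (π v)) - B.mulVec (ηmap (π v))
      + A0.mulVec (P.mulVec (v - (π v : Fin r → ℝ))) := by
    intro v
    simp [hHdef, Matrix.mulVecLin_apply, hPldef]
  have hHK : ∀ v ∈ K, H v = 0 := by
    intro v hv
    have hπv : π v = 0 := Submodule.linearProjOfIsCompl_apply_right' hcompl (x := v) (hKS hv)
    have hPv : P.mulVec v = 0 := hv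
    rw [hHapply, hπv]
    simp [hPv]
  have hQH : ∀ v, Q.mulVec (H v) = R.mulVec v := by
    intro v
    rw [hHapply]
    have hQA0P : ∀ z, (Q * A0 * P).mulVec z = R.mulVec z := fun z => by rw [← hA0]
    have e1 : Q.mulVec (A0.mulVec (P.mulVec (v - (π v : Fin r → ℝ)))) =
        R.mulVec (v - (π v : Fin r → ℝ)) := by
      rw [Matrix.mulVec_mulVec, Matrix.mulVec_mulVec, hQA0P]
    have e2 : Q.mulVec (Pl ((wmap (π v) : Fin r → ℝ))) =
        R.mulVec ((π v : Fin r → ℝ)) + (Q * B).mulVec (ηmap (π v)) := by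
      rw [hPldef]
      simpa [Matrix.mulVecLin_apply, Matrix.mulVec_mulVec] using fact1 (π v)
    rw [Matrix.mulVec_add, Matrix.mulVec_sub, e1, e2]
    have e3 : Q.mulVec (B.mulVec (ηmap (π v))) = (Q * B).mulVec (ηmap (π v)) :=
      Matrix.mulVec_mulVec _ _ _
    rw [e3, Matrix.mulVec_sub]
    abel
  -- factor H through Pl
  obtain ⟨sP, hsP⟩ := Pl.rangeRestrict.exists_rightInverse_of_surjective Pl.range_rangeRestrict
  obtain ⟨T', hT'⟩ := Submodule.exists_isCompl (LinearMap.range Pl)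
  set ρ := Submodule.linearProjOfIsCompl _ T' hT' with hρdef
  set G := H.comp (sP.comp ρ) with hGdef
  have hG : ∀ v, G (Pl v) = H v := by
    intro v
    have h1 : ρ (Pl v) = ⟨Pl v, LinearMap.mem_range_self _ v⟩ :=
      Submodule.linearProjOfIsCompl_apply_left hT' ⟨Pl v, LinearMap.mem_range_self _ v⟩
    have h2 : Pl (sP ⟨Pl v, LinearMap.mem_range_self _ v⟩) = Pl v := by
      have := LinearMap.congr_fun hsP ⟨Pl v, LinearMap.mem_range_self _ v⟩
      simpa [Subtype.ext_iff] using this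
    have h3 : sP ⟨Pl v, LinearMap.mem_range_self _ v⟩ - v ∈ K := by
      rw [hKdef, LinearMap.mem_ker, map_sub, h2, sub_self]
    have h4 := hHK _ h3
    rw [map_sub] at h4
    have h5 : H (sP ⟨Pl v, LinearMap.mem_range_self _ v⟩) = H v := sub_eq_zero.mp h4
    simp only [hGdef, LinearMap.comp_apply, h1]
    exact h5
  set Abar := LinearMap.toMatrix' G with hAdef
  have hAbar : Abar.mulVecLin = G := by
    rw [hAdef, ← Matrix.toLin'_apply', Matrix.toLin'_toMatrix']
  refine ⟨Abar, ?_, ?_⟩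
  · have hmv : (Q * Abar * P).mulVecLin = R.mulVecLin := by
      apply LinearMap.ext
      intro v
      have : (Q * Abar * P).mulVec v = Q.mulVec (Abar.mulVec (P.mulVec v)) := by
        rw [Matrix.mulVec_mulVec, Matrix.mulVec_mulVec]
      simp only [Matrix.mulVecLin_apply, this]
      have hA : Abar.mulVec (P.mulVec v) = G (Pl v) := by
        rw [← Matrix.mulVecLin_apply, hAbar, hPldef, Matrix.mulVecLin_apply]
      rw [hA, hG, hQH]
    have hinj : Function.Injective (Matrix.mulVecLin :
        Matrix (Fin l) (Fin r) ℝ → ((Fin r → ℝ) →ₗ[ℝ] (Fin l → ℝ))) := by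
      intro M N h
      apply Matrix.toLin'.injective
      rw [Matrix.toLin'_apply', Matrix.toLin'_apply', h]
    exact (hinj hmv).symm
  · intro x hx
    obtain ⟨v, hv, rfl⟩ := hx
    obtain ⟨y, hy, z, hz, hyz⟩ := Submodule.mem_sup.mp (hsup ▸ hv)
    have hyK : y ∈ K := hy.1
    have hπv : π v = ⟨z, hz⟩ := by
      rw [← hyz, map_add]
      have h1 : π y = 0 := Submodule.linearProjOfIsCompl_apply_right' hcompl (x := y) (hKS hyK)
      have h2 : π z = ⟨z, hz⟩ := Submodule.linearProjOfIsCompl_apply_left hcompl ⟨z, hz⟩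
      rw [h1, h2, zero_add]
    have hPy : P.mulVec y = 0 := hyK
    refine ⟨ηmap ⟨z, hz⟩, ?_, ?_⟩
    · have hA : Abar.mulVec (Pl v) = H v := by
        rw [← Matrix.mulVecLin_apply, hAbar]; exact hG v
      rw [hA, hHapply, hπv]
      have : v - z = y := by rw [← hyz]; ring
      rw [this, hPy]
      simp only [Matrix.mulVec_zero, add_zero, sub_add_cancel]
      exact ⟨(wmap ⟨z, hz⟩ : Fin r → ℝ), (wmap ⟨z, hz⟩).2, rfl⟩
    · have hPv : Pl v = P.mulVec z := by
        rw [hPldef]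
        simp only [Matrix.mulVecLin_apply]
        rw [← hyz, Matrix.mulVec_add, hPy, zero_add]
      rw [hPv, Matrix.mulVec_mulVec]
      exact fact2 ⟨z, hz⟩
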